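/- Let J be a small category and F : J ⥤ Locale a diagram such that: for every object j the frame underlying F(j) is coherent, meaning its top element is a compact element, the meet of any two compact elements is compact, and every element is a join of compact elements; and for every morphism of J the corresponding frame homomorphism maps compact elements to compact elements. If c is a limit cone over F in Locale, then the frame underlying the apex of c is coherent. -/

import Mathlib

open CategoryTheory CategoryTheory.Limits

/-- A *coherent frame*: the top element is compact, the meet of two compact elements is
compact, and every element is a join of compact elements. -/
def IsCoherentFrame (L : Type*) [Order.Frame L] : Prop :=
  IsCompactElement (⊤ : L) ∧
  (∀ a b : L, IsCompactElement a → IsCompactElement b →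
    IsCompactElement (a ⊓ b)) ∧
  ∀ a : L, a = sSup {b | b ≤ a ∧ IsCompactElement b}

/-- The frame homomorphism underlying a morphism of locales. -/
def frameHomOfLocaleHom {X Y : Locale} (f : X ⟶ Y) : FrameHom ↥Y.unop ↥X.unop :=
  f.unop.hom

namespace CoherentLimitAux

variable {J : Type*} [SmallCategory J] (F : J ⥤ Locale) (c : Cone F)

/-- The frame homomorphism underlying a leg of the limit cone. -/
def pr (j : J) : FrameHom ↥(F.obj j).unop ↥c.pt.unop := frameHomOfLocaleHom (c.π.app j)

lemma pr_natural {j j' : J} (φ : j ⟶ j') (b : ↥(F.obj j').unop) :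
    pr F c j' b = pr F c j (frameHomOfLocaleHom (F.map φ) b) := by
  have h : c.π.app j ≫ F.map φ = c.π.app j' := c.w φ
  have h2 : (show FrameHom ↥(F.obj j').unop ↥c.pt.unop from (c.π.app j ≫ F.map φ).unop.hom)
      = pr F c j' := congrArg (fun f => f.unop.hom) h
  exact (congrFun (congrArg DFunLike.coe h2) b).symm

/-- The sublattice of the apex generated by images of compact elements. -/
inductive InC : ↥c.pt.unop → Prop
  | gen (j : J) (k : ↥(F.obj j).unop) :
      IsCompactElement k → InC (pr F c j k)
  | top : InC ⊤
  | bot : InC ⊥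
  | inf {x y : ↥c.pt.unop} : InC x → InC y → InC (x ⊓ y)
  | sup {x y : ↥c.pt.unop} : InC x → InC y → InC (x ⊔ y)

/-- Ideals of the sublattice `InC`. -/
structure IsIdl (I : Set ↥c.pt.unop) : Prop where
  subC : ∀ x ∈ I, InC F c x
  bot_mem : (⊥ : ↥c.pt.unop) ∈ I
  down : ∀ x ∈ I, ∀ y, InC F c y → y ≤ x → y ∈ I
  sup_mem : ∀ x ∈ I, ∀ y ∈ I, x ⊔ y ∈ I

/-- The frame of ideals of the sublattice `InC`. -/
def Idl := {I : Set ↥c.pt.unop // IsIdl F c I}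

namespace Idl

instance : PartialOrder (Idl F c) := Subtype.partialOrder _

lemma le_iff {I K : Idl F c} : I ≤ K ↔ I.1 ⊆ K.1 := Iff.rfl

/-- Constructor for ideals. -/
def mk (I : Set ↥c.pt.unop) (h : IsIdl F c I) : Idl F c := ⟨I, h⟩

lemma mem_of_finsetSup {I : Set ↥c.pt.unop} (hI : IsIdl F c I) {ι : Type*} {t : Finset ι}
    {f : ι → ↥c.pt.unop} (hf : ∀ i ∈ t, f i ∈ I) {x : ↥c.pt.unop} (hx : InC F c x)
    (hxt : x ≤ t.sup f) : x ∈ I :=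
  hI.down _ (Finset.sup_mem I hI.bot_mem hI.sup_mem t f hf) x hx hxt

/-- The ideal generated by a set. -/
def genIdl (S : Set ↥c.pt.unop) : Set ↥c.pt.unop :=
  {x | InC F c x ∧ ∃ t : Finset ↥c.pt.unop, ↑t ⊆ S ∧ x ≤ t.sup id}

lemma isIdl_genIdl (S : Set ↥c.pt.unop) : IsIdl F c (genIdl F c S) where
  subC _ hx := hx.1
  bot_mem := ⟨InC.bot, ∅, by simp, by simp⟩
  down := fun x hx y hy hyx => ⟨hy, hx.2.choose, hx.2.choose_spec.1,
    hyx.trans hx.2.choose_spec.2⟩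
  sup_mem := by
    classical
    rintro x ⟨hx, t, ht, hxt⟩ y ⟨hy, s, hs, hys⟩
    refine ⟨InC.sup hx hy, t ∪ s, ?_, ?_⟩
    · push_cast
      exact Set.union_subset ht hs
    · rw [Finset.sup_union]
      exact sup_le_sup hxt hys

lemma mem_genIdl_self {S : Set ↥c.pt.unop} {x : ↥c.pt.unop} (hx : x ∈ S) (h : InC F c x) :
    x ∈ genIdl F c S :=
  ⟨h, {x}, by simpa using hx, by simp⟩

lemma genIdl_mono {S T : Set ↥c.pt.unop} (h : S ⊆ T) : genIdl F c S ⊆ genIdl F c T := by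
  rintro x ⟨hx, t, ht, hxt⟩
  exact ⟨hx, t, ht.trans h, hxt⟩

lemma genIdl_subset {S I : Set ↥c.pt.unop} (hI : IsIdl F c I) (h : S ⊆ I) :
    genIdl F c S ⊆ I := by
  rintro x ⟨hx, t, ht, hxt⟩
  exact mem_of_finsetSup F c hI (fun i hi => h (ht hi)) hx hxt

noncomputable instance : SupSet (Idl F c) :=
  ⟨fun S => ⟨genIdl F c (⋃ I ∈ S, I.1), isIdl_genIdl F c _⟩⟩

lemma coe_sSup (S : Set (Idl F c)) :
    (sSup S : Idl F c).1 = genIdl F c (⋃ I ∈ S, I.1) := rfl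

lemma isLUB_sSup (S : Set (Idl F c)) : IsLUB S (sSup S) := by
  constructor
  · intro I hI x hx
    exact mem_genIdl_self F c (Set.mem_biUnion hI hx) (I.2.subC x hx)
  · intro K hK
    rw [le_iff, coe_sSup]
    refine genIdl_subset F c K.2 ?_
    rintro x hx
    obtain ⟨I, hI, hxI⟩ := Set.mem_iUnion₂.mp hx
    exact hK hI hxI

noncomputable instance : CompleteLattice (Idl F c) :=
  completeLatticeOfSup _ (isLUB_sSup F c)

lemma coe_inf (I K : Idl F c) : (I ⊓ K : Idl F c).1 = I.1 ∩ K.1 := by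
  apply subset_antisymm
  · exact Set.subset_inter ((le_iff F c).mp inf_le_left) ((le_iff F c).mp inf_le_right)
  · have hIdl : IsIdl F c (I.1 ∩ K.1) :=
      { subC := fun x hx => I.2.subC x hx.1
        bot_mem := ⟨I.2.bot_mem, K.2.bot_mem⟩
        down := fun x hx y hy hyx => ⟨I.2.down x hx.1 y hy hyx, K.2.down x hx.2 y hy hyx⟩
        sup_mem := fun x hx y hy => ⟨I.2.sup_mem x hx.1 y hy.1, K.2.sup_mem x hx.2 y hy.2⟩ }
    have h1 : mk F c (I.1 ∩ K.1) hIdl ≤ I := (le_iff F c).mpr Set.inter_subset_left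
    have h2 : mk F c (I.1 ∩ K.1) hIdl ≤ K := (le_iff F c).mpr Set.inter_subset_right
    exact (le_iff F c).mp (le_inf h1 h2)

lemma coe_top : (⊤ : Idl F c).1 = {x | InC F c x} := by
  apply subset_antisymm
  · exact fun x hx => (⊤ : Idl F c).2.subC x hx
  · have hIdl : IsIdl F c {x | InC F c x} :=
      { subC := fun x hx => hx
        bot_mem := InC.bot
        down := fun x _ y hy _ => hy
        sup_mem := fun x hx y hy => InC.sup hx hy }
    exact (le_iff F c).mp (le_top (a := mk F c {x | InC F c x} hIdl))

lemma mem_of_le {I K : Idl F c} (h : I ≤ K) {x : ↥c.pt.unop} (hx : x ∈ I.1) : x ∈ K.1 :=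
  (le_iff F c).mp h hx

noncomputable instance : Order.Frame (Idl F c) := by
  refine Order.Frame.ofMinimalAxioms
    { (inferInstance : CompleteLattice (Idl F c)) with inf_sSup_le_iSup_inf := ?_ }
  intro I S
  rw [le_iff]
  intro x hx
  rw [coe_inf] at hx
  have hxI := hx.1
  obtain ⟨hxC, t, ht, hxt⟩ := hx.2
  have hxd : x ≤ t.sup fun p => x ⊓ id p := by
    calc x ≤ x ⊓ t.sup id := le_inf le_rfl hxt
    _ = t.sup fun p => x ⊓ id p := Finset.sup_inf_distrib_left t id x
  refine mem_of_finsetSup F c (⨆ b ∈ S, I ⊓ b).2 (fun p hp => ?_) hxC hxd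
  show x ⊓ p ∈ _
  obtain ⟨Ip, hIpS, hpIp⟩ := Set.mem_iUnion₂.mp (ht hp)
  have hle : I ⊓ Ip ≤ ⨆ b ∈ S, I ⊓ b := le_iSup₂_of_le Ip hIpS le_rfl
  apply mem_of_le F c hle
  rw [coe_inf]
  have hpC : InC F c p := Ip.2.subC p hpIp
  exact ⟨I.2.down x hxI _ (InC.inf hxC hpC) inf_le_left,
    Ip.2.down p hpIp _ (InC.inf hxC hpC) inf_le_right⟩

end Idl

open Idl

/-- Generators of the ideal associated to an element of one of the frames in the diagram. -/
def gens (j : J) (a : ↥(F.obj j).unop) : Set ↥c.pt.unop :=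
  pr F c j '' {k | IsCompactElement k ∧ k ≤ a}

/-- Covering the generators of a supremum. -/
lemma gens_sSup_subset (hcoh : ∀ j : J, IsCoherentFrame ↥(F.obj j).unop) (j : J)
    (A : Set ↥(F.obj j).unop) (T : Idl F c)
    (hT : ∀ a ∈ A, genIdl F c (gens F c j a) ⊆ T.1) :
    gens F c j (sSup A) ⊆ T.1 := by
  rintro x ⟨k, ⟨hk, hka⟩, rfl⟩
  have hA : sSup A ≤
      sSup (⋃ a ∈ A, {m | m ≤ a ∧ IsCompactElement m}) := by
    apply sSup_le
    intro a ha
    calc a = sSup {b | b ≤ a ∧ IsCompactElement b} := (hcoh j).2.2 a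
    _ ≤ _ := sSup_le_sSup (Set.subset_biUnion_of_mem
      (u := fun a => {m | m ≤ a ∧ IsCompactElement m}) ha)
  obtain ⟨s, hsU, hks⟩ := (CompleteLattice.isCompactElement_iff_exists_le_sSup_of_le_sSup (k := k)).mp hk _ (hka.trans hA)
  have hmem : ∀ p ∈ s, pr F c j p ∈ T.1 := by
    intro p hp
    obtain ⟨a, ha, hpa, hpk⟩ := Set.mem_iUnion₂.mp (hsU hp)
    exact hT a ha (mem_genIdl_self F c (Set.mem_image_of_mem _ ⟨hpk, hpa⟩) (InC.gen j p hpk))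
  refine mem_of_finsetSup F c T.2 hmem (InC.gen j k hk) ?_
  calc pr F c j k ≤ pr F c j (s.sup id) := OrderHomClass.mono (pr F c j) hks
  _ = s.sup fun p => pr F c j (id p) := map_finset_sup (pr F c j) s id

/-- The frame homomorphism `F.obj j → Idl`. -/
noncomputable def flift (hcoh : ∀ j : J, IsCoherentFrame ↥(F.obj j).unop) (j : J) :
    FrameHom ↥(F.obj j).unop (Idl F c) where
  toFun a := mk F c (genIdl F c (gens F c j a)) (isIdl_genIdl F c _)
  map_inf' a b := by
    classical
    apply Subtype.ext
    show genIdl F c (gens F c j (a ⊓ b)) = _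
    rw [coe_inf]
    apply subset_antisymm
    · apply Set.subset_inter
      · exact genIdl_mono F c
          (by rintro x ⟨k, hk, rfl⟩; exact ⟨k, ⟨hk.1, hk.2.trans inf_le_left⟩, rfl⟩)
      · exact genIdl_mono F c
          (by rintro x ⟨k, hk, rfl⟩; exact ⟨k, ⟨hk.1, hk.2.trans inf_le_right⟩, rfl⟩)
    · rintro x ⟨⟨hxC, t, ht, hxt⟩, ⟨-, s, hs, hxs⟩⟩
      have hps : ∀ p ∈ t ×ˢ s, p.1 ⊓ p.2 ∈ genIdl F c (gens F c j (a ⊓ b)) := by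
        rintro ⟨p, q⟩ hpq
        rw [Finset.mem_product] at hpq
        obtain ⟨k, hk, rfl⟩ := ht hpq.1
        obtain ⟨m, hm, rfl⟩ := hs hpq.2
        have heq : pr F c j k ⊓ pr F c j m = pr F c j (k ⊓ m) := (map_inf _ _ _).symm
        show pr F c j k ⊓ pr F c j m ∈ _
        rw [heq]
        exact mem_genIdl_self F c
          ⟨k ⊓ m, ⟨(hcoh j).2.1 k m hk.1 hm.1, inf_le_inf hk.2 hm.2⟩, rfl⟩
          (InC.gen j _ ((hcoh j).2.1 k m hk.1 hm.1))
      refine mem_of_finsetSup F c (isIdl_genIdl F c _) hps hxC ?_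
      calc x ≤ t.sup id ⊓ s.sup id := le_inf hxt hxs
      _ = (t ×ˢ s).sup fun p => id p.1 ⊓ id p.2 := Finset.sup_inf_sup t s id id
  map_top' := by
    apply Subtype.ext
    show genIdl F c (gens F c j ⊤) = _
    rw [coe_top]
    apply subset_antisymm
    · exact fun x hx => hx.1
    · intro x hx
      refine ⟨hx, {pr F c j ⊤}, ?_, ?_⟩
      · rw [Finset.coe_singleton, Set.singleton_subset_iff]
        exact ⟨⊤, ⟨(hcoh j).1, le_rfl⟩, rfl⟩
      · rw [Finset.sup_singleton]
        exact le_top.trans (map_top (pr F c j)).ge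
  map_sSup' A := by
    apply le_antisymm
    · have key : mk F c (genIdl F c (gens F c j (sSup A))) (isIdl_genIdl F c _) ≤
          sSup ((fun a => mk F c (genIdl F c (gens F c j a)) (isIdl_genIdl F c _)) '' A) := by
        set T := sSup ((fun a => mk F c (genIdl F c (gens F c j a)) (isIdl_genIdl F c _)) '' A)
          with hT
        refine (le_iff F c).mpr ?_
        refine genIdl_subset F c T.2 (gens_sSup_subset F c hcoh j A T ?_)
        intro a ha x hx
        exact mem_of_le F c ((isLUB_sSup F c _).1 (Set.mem_image_of_mem _ ha)) hx
      exact key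
    · refine sSup_le ?_
      rintro I ⟨a, ha, rfl⟩
      refine (le_iff F c).mpr ?_
      show genIdl F c (gens F c j a) ⊆ genIdl F c (gens F c j (sSup A))
      refine genIdl_mono F c ?_
      rintro x ⟨k, hk, rfl⟩
      exact ⟨k, ⟨hk.1, hk.2.trans (le_sSup ha)⟩, rfl⟩

variable (hcoh : ∀ j : J, IsCoherentFrame ↥(F.obj j).unop)

lemma flift_coe (j : J) (a : ↥(F.obj j).unop) :
    (flift F c hcoh j a).1 = genIdl F c (gens F c j a) := by rfl

lemma flift_natural
    (hmap : ∀ {j j' : J} (φ : j ⟶ j') (k : ↥(F.obj j').unop),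
      IsCompactElement k →
      IsCompactElement (frameHomOfLocaleHom (F.map φ) k))
    {j j' : J} (φ : j ⟶ j') (b : ↥(F.obj j').unop) :
    flift F c hcoh j' b = flift F c hcoh j (frameHomOfLocaleHom (F.map φ) b) := by
  set g := frameHomOfLocaleHom (F.map φ) with hg
  apply Subtype.ext
  rw [flift_coe, flift_coe]
  apply subset_antisymm
  · apply genIdl_mono
    rintro x ⟨m, hm, rfl⟩
    exact ⟨g m, ⟨hmap φ m hm.1, OrderHomClass.mono g hm.2⟩, (pr_natural F c φ m).symm⟩
  · refine genIdl_subset F c (isIdl_genIdl F c _) ?_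
    rintro x ⟨k, ⟨hk, hkb⟩, rfl⟩
    -- `k` is compact below `g b`; cover `g b` by images of compacts below `b`
    have hb : g b = sSup (g '' {m | m ≤ b ∧ IsCompactElement m}) := by
      conv_lhs => rw [(hcoh j').2.2 b]
      exact map_sSup g _
    obtain ⟨s, hsU, hks⟩ := (CompleteLattice.isCompactElement_iff_exists_le_sSup_of_le_sSup (k := k)).mp hk _ (hb ▸ hkb)
    have hmem : ∀ p ∈ s, pr F c j p ∈ genIdl F c (gens F c j' b) := by
      intro p hp
      obtain ⟨m, ⟨hmb, hmk⟩, rfl⟩ := hsU hp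
      have : pr F c j (g m) = pr F c j' m := (pr_natural F c φ m).symm
      rw [this]
      exact mem_genIdl_self F c ⟨m, ⟨hmk, hmb⟩, rfl⟩ (InC.gen j' m hmk)
    refine mem_of_finsetSup F c (isIdl_genIdl F c _) hmem (InC.gen j k hk) ?_
    calc pr F c j k ≤ pr F c j (s.sup id) := OrderHomClass.mono (pr F c j) hks
    _ = s.sup fun p => pr F c j (id p) := map_finset_sup (pr F c j) s id

/-- The frame homomorphism from ideals back to the apex, taking suprema. -/
noncomputable def vmap : FrameHom (Idl F c) ↥c.pt.unop where
  toFun I := sSup I.1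
  map_inf' I K := by
    show sSup (I ⊓ K : Idl F c).1 = _
    rw [coe_inf]
    apply le_antisymm
    · exact le_inf (sSup_le_sSup Set.inter_subset_left) (sSup_le_sSup Set.inter_subset_right)
    · rw [sSup_inf_sSup]
      refine iSup₂_le ?_
      rintro ⟨x, y⟩ ⟨hx, hy⟩
      refine le_sSup ⟨I.2.down x hx _ (InC.inf (I.2.subC x hx) (K.2.subC y hy)) inf_le_left,
        K.2.down y hy _ (InC.inf (I.2.subC x hx) (K.2.subC y hy)) inf_le_right⟩
  map_top' := by
    show sSup (⊤ : Idl F c).1 = ⊤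
    rw [coe_top]
    exact top_unique (le_sSup InC.top)
  map_sSup' S := by
    show sSup (sSup S : Idl F c).1 = _
    apply le_antisymm
    · rw [coe_sSup]
      apply sSup_le
      rintro x ⟨hx, t, ht, hxt⟩
      refine hxt.trans (Finset.sup_le fun p hp => ?_)
      obtain ⟨I, hI, hpI⟩ := Set.mem_iUnion₂.mp (ht hp)
      exact le_trans (le_sSup hpI) (le_sSup (Set.mem_image_of_mem _ hI))
    · apply sSup_le
      rintro y ⟨I, hI, rfl⟩
      exact sSup_le_sSup ((le_iff F c).mp ((isLUB_sSup F c S).1 hI))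

lemma vmap_flift (j : J) (a : ↥(F.obj j).unop) :
    vmap F c (flift F c hcoh j a) = pr F c j a := by
  show sSup (flift F c hcoh j a).1 = _
  rw [flift_coe]
  apply le_antisymm
  · apply sSup_le
    rintro x ⟨hx, t, ht, hxt⟩
    refine hxt.trans (Finset.sup_le fun p hp => ?_)
    obtain ⟨k, hk, rfl⟩ := ht hp
    exact OrderHomClass.mono (pr F c j) hk.2
  · have : pr F c j a = sSup (pr F c j '' {b | b ≤ a ∧ IsCompactElement b}) := by
      conv_lhs => rw [(hcoh j).2.2 a]
      exact map_sSup _ _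
    rw [this]
    apply sSup_le
    rintro x ⟨k, hk, rfl⟩
    have hmem : pr F c j k ∈ gens F c j a := Set.mem_image_of_mem _ ⟨hk.2, hk.1⟩
    exact le_sSup (mem_genIdl_self F c hmem (InC.gen j k hk.2))

lemma mem_u_self (u : FrameHom ↥c.pt.unop (Idl F c))
    (hu : ∀ (j : J) (a : ↥(F.obj j).unop), u (pr F c j a) = flift F c hcoh j a)
    {x : ↥c.pt.unop} (hx : InC F c x) : x ∈ (u x).1 := by
  induction hx with
  | gen j k hk =>
    rw [hu j k]
    exact mem_genIdl_self F c ⟨k, ⟨hk, le_rfl⟩, rfl⟩ (InC.gen j k hk)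
  | top =>
    rw [map_top, coe_top]
    exact InC.top
  | bot => exact (u ⊥).2.bot_mem
  | inf hx hy ihx ihy =>
    rename_i x y
    rw [map_inf, coe_inf]
    exact ⟨(u x).2.down x ihx _ (InC.inf hx hy) inf_le_left,
      (u y).2.down y ihy _ (InC.inf hx hy) inf_le_right⟩
  | sup hx hy ihx ihy =>
    rename_i x y
    have h1 : x ∈ (u (x ⊔ y)).1 := mem_of_le F c (OrderHomClass.mono u le_sup_left) ihx
    have h2 : y ∈ (u (x ⊔ y)).1 := mem_of_le F c (OrderHomClass.mono u le_sup_right) ihy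
    exact (u (x ⊔ y)).2.sup_mem x h1 y h2

lemma compact_of_InC (u : FrameHom ↥c.pt.unop (Idl F c))
    (hu : ∀ (j : J) (a : ↥(F.obj j).unop), u (pr F c j a) = flift F c hcoh j a)
    (hv : ∀ a : ↥c.pt.unop, sSup (u a).1 = a)
    {x : ↥c.pt.unop} (hx : InC F c x) : IsCompactElement x := by
  classical
  rw [CompleteLattice.isCompactElement_iff_exists_le_sSup_of_le_sSup]
  intro S hS
  have h1 : x ∈ (u (sSup S)).1 :=
    mem_of_le F c (OrderHomClass.mono u hS) (mem_u_self F c hcoh u hu hx)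
  rw [map_sSup, coe_sSup] at h1
  obtain ⟨-, t, ht, hxt⟩ := h1
  have key : ∀ p ∈ t, ∃ a, a ∈ S ∧ p ≤ a := by
    intro p hp
    obtain ⟨I, ⟨a, ha, rfl⟩, hpI⟩ := Set.mem_iUnion₂.mp (ht hp)
    exact ⟨a, ha, (le_sSup hpI).trans (hv a).le⟩
  set gsel : ↥c.pt.unop → ↥c.pt.unop := fun p =>
    if h : ∃ a, a ∈ S ∧ p ≤ a then h.choose else ⊥ with hgsel
  refine ⟨t.image gsel, ?_, ?_⟩
  · intro q hq
    rw [Finset.coe_image] at hq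
    obtain ⟨p, hp, rfl⟩ := hq
    have h := key p hp
    rw [hgsel]
    simp only [dif_pos h]
    exact h.choose_spec.1
  · refine hxt.trans (Finset.sup_le fun p hp => ?_)
    have h := key p hp
    have hple : p ≤ gsel p := by
      rw [hgsel]; simp only [dif_pos h]; exact h.choose_spec.2
    exact hple.trans (Finset.le_sup (f := id) (Finset.mem_image_of_mem gsel hp))

end CoherentLimitAux

open CoherentLimitAux CoherentLimitAux.Idl in
/-- A limit of coherent locales along coherent maps is coherent: if every locale in a diagram
is coherent and every frame homomorphism underlying a morphism of the diagram maps compact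
elements to compact elements, then the apex of any limit cone is a coherent locale. -/
theorem coherent_closed_under_limits {J : Type*} [SmallCategory J]
    (F : J ⥤ Locale)
    (hcoh : ∀ j : J, IsCoherentFrame ↥(F.obj j).unop)
    (hmap : ∀ {j j' : J} (φ : j ⟶ j') (k : ↥(F.obj j').unop),
      IsCompactElement k →
      IsCompactElement (frameHomOfLocaleHom (F.map φ) k))
    (c : Cone F) (hc : IsLimit c) :
    IsCoherentFrame ↥c.pt.unop := by
  classical
  -- the cone over `F` whose apex is the frame of ideals
  let D : Cone F :=
    { pt := Opposite.op (Frm.of (Idl F c))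
      π :=
        { app := fun j => (show (F.obj j).unop ⟶ Frm.of (Idl F c) from Frm.ofHom (flift F c hcoh j)).op
          naturality := by
            intro j j' φ
            simp only [Functor.const_obj_map, Category.id_comp]
            apply Quiver.Hom.unop_inj
            apply Frm.ext
            intro b
            exact flift_natural F c hcoh hmap φ b } }
  set ℓ := hc.lift D with hℓ
  set u : FrameHom ↥c.pt.unop (Idl F c) := (show FrameHom _ _ from ℓ.unop.hom) with hu0
  have hu : ∀ (j : J) (a : ↥(F.obj j).unop), u (pr F c j a) = flift F c hcoh j a := by
    intro j a
    have h := hc.fac D j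
    have h2 : (show FrameHom ↥(F.obj j).unop (Idl F c) from (ℓ ≫ c.π.app j).unop.hom)
        = flift F c hcoh j := congrArg (fun f => f.unop.hom) h
    exact congrFun (congrArg DFunLike.coe h2) a
  let V : c.pt ⟶ Opposite.op (Frm.of (Idl F c)) :=
    (show Frm.of (Idl F c) ⟶ c.pt.unop from Frm.ofHom (vmap F c)).op
  have hVD : ∀ j, V ≫ D.π.app j = c.π.app j := by
    intro j
    apply Quiver.Hom.unop_inj
    apply Frm.ext
    intro a
    exact vmap_flift F c hcoh j a
  have hid : V ≫ ℓ = 𝟙 c.pt := by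
    apply hc.hom_ext
    intro j
    exact (Category.assoc _ _ _).trans ((congrArg (V ≫ ·) (hc.fac D j)).trans ((hVD j).trans (Category.id_comp _).symm))
  have hv : ∀ a : ↥c.pt.unop, sSup (u a).1 = a := by
    intro a
    have h2 : (show FrameHom ↥c.pt.unop ↥c.pt.unop from (V ≫ ℓ).unop.hom)
        = (show FrameHom ↥c.pt.unop ↥c.pt.unop from (𝟙 c.pt : c.pt ⟶ c.pt).unop.hom) :=
      congrArg (fun f => f.unop.hom) hid
    exact congrFun (congrArg DFunLike.coe h2) a
  have hcpt : ∀ x : ↥c.pt.unop, InC F c x → IsCompactElement x :=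
    fun x hx => compact_of_InC F c hcoh u hu hv hx
  have hInC : ∀ a : ↥c.pt.unop, IsCompactElement a → InC F c a := by
    intro a ha
    have h1 : a ≤ sSup (u a).1 := (hv a).ge
    obtain ⟨t, ht, hat⟩ := (CompleteLattice.isCompactElement_iff_exists_le_sSup_of_le_sSup (k := a)).mp ha _ h1
    have h2 : t.sup id ≤ a := Finset.sup_le fun p hp => (le_sSup (ht hp)).trans (hv a).le
    have h3 : a = t.sup id := le_antisymm hat h2
    rw [h3]
    exact Finset.sup_mem {x | InC F c x} InC.bot (fun x hx y hy => InC.sup hx hy) t id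
      fun p hp => (u a).2.subC p (ht hp)
  refine ⟨hcpt _ InC.top, fun a b ha hb => hcpt _ (InC.inf (hInC a ha) (hInC b hb)), fun a => ?_⟩
  refine le_antisymm ?_ (sSup_le fun b hb => hb.1)
  calc a = sSup (u a).1 := (hv a).symm
  _ ≤ sSup {b | b ≤ a ∧ IsCompactElement b} :=
    sSup_le_sSup fun x hx => ⟨(le_sSup hx).trans (hv a).le, hcpt x ((u a).2.subC x hx)⟩
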